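/- Let φ = C₁ ∧ ⋯ ∧ C_m be a 3-CNF formula over variables X, where C_i = (ℓ_{i1} ∨ ℓ_{i2} ∨ ℓ_{i3}), and let F=(A,R) be the AF with A = {ℓ_{ij} | 1 ≤ i ≤ m, 1 ≤ j ≤ 3} ∪ {a,b} (one argument per literal occurrence plus two fresh arguments a,b) and R consisting of the symmetric attacks {ℓ_{i1},ℓ_{i2}}, {ℓ_{i2},ℓ_{i3}}, {ℓ_{i3},ℓ_{i1}} for each i ≤ m, the symmetric attacks {ℓ,ℓ'} between every pair of occurrences of complementary literals (ℓ = x, ℓ' = ¬x for some x ∈ X), the symmetric attack {a,b}, and symmetric attacks {b,x} for every x ∈ A \ {b}. Then there exist naive extensions S,T of F with a ∈ S, b ∈ T and d(S,T) = m+2 if and only if φ is satisfiable. -/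

import Mathlib

open scoped symmDiff

/-- A set of arguments is conflict-free w.r.t. the attack relation `R`. -/
def ConflictFree {α : Type*} (R : α → α → Prop) (S : Finset α) : Prop :=
  ∀ x ∈ S, ∀ y ∈ S, ¬ R x y

/-- A set is naive (w.r.t. an AF whose set of arguments is the whole type) if it is
conflict-free and no proper superset of it is conflict-free. -/
def Naive {α : Type*} (R : α → α → Prop) (S : Finset α) : Prop :=
  ConflictFree R S ∧ ∀ S' : Finset α, S ⊂ S' → ¬ ConflictFree R S'

/-- Arguments of the reduction AF for a 3-CNF with `m` clauses: one argument per
literal occurrence `(i,j)` (the `j`-th literal of clause `i`), plus the two fresh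
arguments `a = Sum.inr false` and `b = Sum.inr true`. -/
abbrev Arg (m : ℕ) : Type := (Fin m × Fin 3) ⊕ Bool

/-- The (symmetric) attack relation of the reduction AF for a 3-CNF with `m` clauses,
whose `j`-th literal of clause `i` is `ℓ i j` (a variable together with a polarity):
a triangle of attacks between the three literal occurrences of each clause, attacks
between every pair of occurrences of complementary literals, an attack between `a`
and `b`, and attacks between `b` and every other argument. -/
def cnfAttack {X : Type*} [DecidableEq X] {m : ℕ} (ℓ : Fin m → Fin 3 → X × Bool) :
    Arg m → Arg m → Prop
  | Sum.inl p, Sum.inl q =>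
      (p.1 = q.1 ∧ p.2 ≠ q.2) ∨
      ((ℓ p.1 p.2).1 = (ℓ q.1 q.2).1 ∧ (ℓ p.1 p.2).2 ≠ (ℓ q.1 q.2).2)
  | Sum.inl _, Sum.inr c => c = true
  | Sum.inr c, Sum.inl _ => c = true
  | Sum.inr c, Sum.inr c' => c ≠ c'

/-- `b` attacks every other argument. -/
lemma b_attacks {X : Type*} [DecidableEq X] {m : ℕ} (ℓ : Fin m → Fin 3 → X × Bool)
    (x : Arg m) (h : x ≠ Sum.inr true) : cnfAttack ℓ (Sum.inr true) x := by
  cases x with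
  | inl p => simp [cnfAttack]
  | inr c =>
    cases c with
    | false => simp [cnfAttack]
    | true => exact absurd rfl h

/-- `a` attacks `b`. -/
lemma a_attacks_b {X : Type*} [DecidableEq X] {m : ℕ} (ℓ : Fin m → Fin 3 → X × Bool) :
    cnfAttack ℓ (Sum.inr false) (Sum.inr true) := by
  simp [cnfAttack]

/-- There exist naive extensions `S, T` of the reduction AF with `a ∈ S`, `b ∈ T`
and `d(S,T) = m + 2` iff the 3-CNF `φ = C₁ ∧ ⋯ ∧ C_m` is satisfiable. -/
theorem stmt13 {X : Type*} [DecidableEq X] (m : ℕ) (ℓ : Fin m → Fin 3 → X × Bool) :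
    (∃ S T : Finset (Arg m),
        Naive (cnfAttack ℓ) S ∧ Naive (cnfAttack ℓ) T ∧
        (Sum.inr false : Arg m) ∈ S ∧ (Sum.inr true : Arg m) ∈ T ∧
        (S ∆ T).card = m + 2) ↔
    (∃ τ : X → Bool, ∀ i : Fin m, ∃ j : Fin 3, τ (ℓ i j).1 = (ℓ i j).2) := by
  classical
  constructor
  · rintro ⟨S, T, ⟨hScf, -⟩, ⟨hTcf, -⟩, haS, hbT, hcard⟩
    -- T = {b}
    have hTb : T = {Sum.inr true} := by
      apply Finset.eq_singleton_iff_unique_mem.mpr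
      refine ⟨hbT, fun y hy => ?_⟩
      by_contra hne
      exact hTcf _ hbT _ hy (b_attacks ℓ y hne)
    -- b ∉ S
    have hbS : (Sum.inr true : Arg m) ∉ S := fun h =>
      hScf _ haS _ h (a_attacks_b ℓ)
    -- card S = m + 1
    have hsd : S ∆ T = insert (Sum.inr true : Arg m) S := by
      subst hTb
      ext x
      simp only [Finset.mem_symmDiff, Finset.mem_singleton, Finset.mem_insert]
      constructor
      · rintro (⟨h1, h2⟩ | ⟨h1, h2⟩)
        · exact Or.inr h1
        · exact Or.inl h1
      · rintro (rfl | h)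
        · exact Or.inr ⟨rfl, hbS⟩
        · by_cases hx : x = Sum.inr true
          · exact absurd (hx ▸ h) hbS
          · exact Or.inl ⟨h, hx⟩
    have hScard : S.card = m + 1 := by
      have h := hcard
      rw [hsd, Finset.card_insert_of_notMem hbS] at h
      omega
    -- the set of literal occurrences in S
    set P : Finset (Fin m × Fin 3) :=
      Finset.univ.filter (fun p => Sum.inl p ∈ S) with hP
    have hSP : S = insert (Sum.inr false : Arg m) (P.image Sum.inl) := by
      ext x
      cases x with
      | inl p =>
        simp [hP, Sum.inl.injEq]
      | inr c =>
        cases c with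
        | false => simp [haS]
        | true => simp [hbS]
    have haP : (Sum.inr false : Arg m) ∉ P.image Sum.inl := by
      intro h
      obtain ⟨p, -, hp⟩ := Finset.mem_image.mp h
      exact Sum.inl_ne_inr hp
    have hPcard : P.card = m := by
      have h1 : S.card = (P.image (Sum.inl : Fin m × Fin 3 → Arg m)).card + 1 := by
        rw [hSP, Finset.card_insert_of_notMem haP]
      rw [Finset.card_image_of_injective _ Sum.inl_injective] at h1
      omega
    -- fst is injective on P
    have hfst : Set.InjOn Prod.fst (P : Set (Fin m × Fin 3)) := by
      intro p hp q hq hpq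
      by_contra hne
      have hp' : Sum.inl p ∈ S := by simpa [hP] using hp
      have hq' : Sum.inl q ∈ S := by simpa [hP] using hq
      have hsnd : p.2 ≠ q.2 := fun h2 => hne (Prod.ext hpq h2)
      exact hScf _ hp' _ hq' (Or.inl ⟨hpq, hsnd⟩)
    have himg : P.image Prod.fst = Finset.univ := by
      apply Finset.eq_univ_of_card
      rw [Finset.card_image_of_injOn hfst, hPcard, Fintype.card_fin]
    have hj : ∀ i : Fin m, ∃ j : Fin 3, Sum.inl (i, j) ∈ S := by
      intro i
      have hi : i ∈ P.image Prod.fst := himg ▸ Finset.mem_univ i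
      obtain ⟨p, hp, hpi⟩ := Finset.mem_image.mp hi
      refine ⟨p.2, ?_⟩
      have : Sum.inl p ∈ S := by simpa [hP] using hp
      rwa [show (i, p.2) = p from Prod.ext hpi.symm rfl]
    set j : Fin m → Fin 3 := fun i => (hj i).choose with hjdef
    have hjS : ∀ i, Sum.inl (i, j i) ∈ S := fun i => (hj i).choose_spec
    -- chosen occurrences are consistent
    have hcons : ∀ i i' : Fin m,
        (ℓ i (j i)).1 = (ℓ i' (j i')).1 → (ℓ i (j i)).2 = (ℓ i' (j i')).2 := by
      intro i i' h1
      by_contra h2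
      exact hScf _ (hjS i) _ (hjS i') (Or.inr ⟨h1, h2⟩)
    refine ⟨fun x => if h : ∃ i : Fin m, (ℓ i (j i)).1 = x
      then (ℓ h.choose (j h.choose)).2 else false, fun i => ⟨j i, ?_⟩⟩
    have hex : ∃ i' : Fin m, (ℓ i' (j i')).1 = (ℓ i (j i)).1 := ⟨i, rfl⟩
    exact (dif_pos hex).trans (hcons _ _ hex.choose_spec)
  · rintro ⟨τ, hτ⟩
    set j : Fin m → Fin 3 := fun i => (hτ i).choose with hjdef
    have hjτ : ∀ i, τ (ℓ i (j i)).1 = (ℓ i (j i)).2 := fun i => (hτ i).choose_spec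
    set L : Finset (Arg m) :=
      Finset.univ.image (fun i : Fin m => Sum.inl (i, j i)) with hL
    set S : Finset (Arg m) := insert (Sum.inr false) L with hS
    have hmemL : ∀ x : Arg m, x ∈ L ↔ ∃ i : Fin m, x = Sum.inl (i, j i) := by
      intro x
      simp [hL, eq_comm]
    have hbS : (Sum.inr true : Arg m) ∉ S := by
      simp [hS, hmemL]
    have haS : (Sum.inr false : Arg m) ∈ S := Finset.mem_insert_self _ _
    have hScf : ConflictFree (cnfAttack ℓ) S := by
      intro x hx y hy hR
      rw [hS, Finset.mem_insert, hmemL] at hx hy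
      rcases hx with rfl | ⟨i, rfl⟩ <;> rcases hy with rfl | ⟨i', rfl⟩
      · simp [cnfAttack] at hR
      · simp [cnfAttack] at hR
      · simp [cnfAttack] at hR
      · rcases hR with ⟨h1, h2⟩ | ⟨h1, h2⟩
        · simp only at h1
          subst h1
          exact h2 rfl
        · apply h2
          rw [← hjτ i, ← hjτ i']
          simp only at h1
          rw [h1]
    refine ⟨S, {Sum.inr true}, ⟨hScf, ?_⟩, ⟨?_, ?_⟩, haS, Finset.mem_singleton_self _, ?_⟩
    · -- maximality of S
      intro S' hss hcf
      obtain ⟨x, hxS', hxS⟩ := Finset.exists_of_ssubset hss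
      cases x with
      | inl p =>
        have hpS : Sum.inl (p.1, j p.1) ∈ S' :=
          hss.subset (by rw [hS, Finset.mem_insert, hmemL]; exact Or.inr ⟨p.1, rfl⟩)
        have hne : p.2 ≠ j p.1 := by
          intro h
          apply hxS
          rw [hS, Finset.mem_insert, hmemL]
          exact Or.inr ⟨p.1, by rw [← h]⟩
        exact hcf _ hxS' _ hpS (Or.inl ⟨rfl, hne⟩)
      | inr c =>
        cases c with
        | false => exact hxS haS
        | true => exact hcf _ (hss.subset haS) _ hxS' (a_attacks_b ℓ)
    · -- {b} conflict-free
      intro x hx y hy hR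
      rw [Finset.mem_singleton] at hx hy
      subst hx; subst hy
      simp [cnfAttack] at hR
    · -- {b} maximal
      intro S' hss hcf
      obtain ⟨x, hxS', hxS⟩ := Finset.exists_of_ssubset hss
      rw [Finset.mem_singleton] at hxS
      exact hcf _ (hss.subset (Finset.mem_singleton_self _)) _ hxS' (b_attacks ℓ x hxS)
    · -- cardinality
      have hinj : Function.Injective (fun i : Fin m => (Sum.inl (i, j i) : Arg m)) := by
        intro i i' h
        have h' : (i, j i) = (i', j i') := Sum.inl_injective h
        exact (Prod.mk.injEq _ _ _ _ ▸ h').1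
      have hsd : S ∆ ({Sum.inr true} : Finset (Arg m)) = insert (Sum.inr true) S := by
        ext x
        simp only [Finset.mem_symmDiff, Finset.mem_singleton, Finset.mem_insert]
        constructor
        · rintro (⟨h1, h2⟩ | ⟨h1, h2⟩)
          · exact Or.inr h1
          · exact Or.inl h1
        · rintro (rfl | h)
          · exact Or.inr ⟨rfl, hbS⟩
          · by_cases hx : x = Sum.inr true
            · exact absurd (hx ▸ h) hbS
            · exact Or.inl ⟨h, hx⟩
      have haL : (Sum.inr false : Arg m) ∉ L := by simp [hmemL]
      rw [hsd, Finset.card_insert_of_notMem hbS, hS,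
        Finset.card_insert_of_notMem haL, hL,
        Finset.card_image_of_injective _ hinj, Finset.card_univ, Fintype.card_fin]
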